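/- The polynomial λ⁶ + 3 is irreducible over ℚ; consequently λ⁶ + 3 has no factor of degree 3 in ℚ[λ], and the matrix equation X² = A with A the companion matrix of λ³ + 3 has no solution X ∈ M₃(ℚ). -/

import Mathlib

open Polynomial

lemma intDeg6 : (X ^ 6 + 3 : ℤ[X]).natDegree = 6 := by
  compute_degree!

lemma intIrr : Irreducible (X ^ 6 + 3 : ℤ[X]) := by
  have hmonic : (X ^ 6 + 3 : ℤ[X]).Monic := by
    apply Polynomial.monic_X_pow_add_C (3:ℤ) (by norm_num)
  have hne : (X ^ 6 + 3 : ℤ[X]) ≠ 0 := hmonic.ne_zero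
  have hdeg : (X ^ 6 + 3 : ℤ[X]).degree = 6 := by
    rw [Polynomial.degree_eq_natDegree hne, intDeg6]; rfl
  apply Polynomial.irreducible_of_eisenstein_criterion
    (Ideal.span_singleton_prime (by norm_num) |>.mpr (by norm_num : Prime (3:ℤ)))
  · rw [hmonic.leadingCoeff]
    intro h
    rw [Ideal.mem_span_singleton] at h
    norm_num at h
  · intro n hn
    rw [hdeg] at hn
    norm_cast at hn
    interval_cases n <;>
      simp [Ideal.mem_span_singleton, coeff_X_pow, coeff_add, coeff_C, coeff_ofNat_zero, coeff_ofNat_succ]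
  · rw [hdeg]; norm_num
  · intro h
    rw [Ideal.span_singleton_pow, Ideal.mem_span_singleton] at h
    simp [coeff_X_pow] at h
  · exact hmonic.isPrimitive

lemma ratIrr : Irreducible (X ^ 6 + 3 : ℚ[X]) := by
  have hprim : (X ^ 6 + 3 : ℤ[X]).IsPrimitive :=
    (Polynomial.monic_X_pow_add_C (3:ℤ) (by norm_num)).isPrimitive
  have := (hprim.irreducible_iff_irreducible_map_fraction_map (K := ℚ)).mp intIrr
  have hmap : Polynomial.map (algebraMap ℤ ℚ) (X ^ 6 + 3 : ℤ[X]) = (X ^ 6 + 3 : ℚ[X]) := by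
    simp
  rwa [hmap] at this

theorem stmt12 :
    Irreducible (X ^ 6 + 3 : ℚ[X]) ∧
    (¬ ∃ h : ℚ[X], h.natDegree = 3 ∧ h ∣ (X ^ 6 + 3 : ℚ[X])) ∧
    (¬ ∃ Y : Matrix (Fin 3) (Fin 3) ℚ,
      Y ^ 2 = !![0, 1, 0; 0, 0, 1; -3, 0, 0]) := by
  have hdeg : (X ^ 6 + 3 : ℚ[X]).natDegree = 6 := by
    compute_degree!
  refine ⟨ratIrr, ?_, ?_⟩
  · rintro ⟨h, h3, c, hc⟩
    rcases ratIrr.isUnit_or_isUnit hc with hu | hu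
    · have := Polynomial.natDegree_eq_zero_of_isUnit hu
      omega
    · have hc0 : c ≠ 0 := hu.ne_zero
      have hh0 : h ≠ 0 := by
        rintro rfl; simp at h3
      have h1 := Polynomial.natDegree_eq_zero_of_isUnit hu
      have h2 := Polynomial.natDegree_mul hh0 hc0
      rw [hc] at hdeg
      omega
  · rintro ⟨Y, hY⟩
    set A : Matrix (Fin 3) (Fin 3) ℚ := !![0, 1, 0; 0, 0, 1; -3, 0, 0] with hA
    have hA3 : A ^ 3 = (-3 : ℚ) • (1 : Matrix (Fin 3) (Fin 3) ℚ) := by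
      rw [pow_succ, pow_two]
      ext i j
      fin_cases i <;> fin_cases j <;>
        simp [hA, Matrix.mul_apply, Fin.sum_univ_three, Matrix.one_apply, Matrix.vecHead, Matrix.vecTail] <;> norm_num
    have hY6 : Y ^ 6 = (-3 : ℚ) • (1 : Matrix (Fin 3) (Fin 3) ℚ) := by
      have h26 : Y ^ 6 = (Y ^ 2) ^ 3 := by rw [← pow_mul]
      rw [h26, hY, hA3]
    have haev : Polynomial.aeval Y (X ^ 6 + 3 : ℚ[X]) = 0 := by
      have h3 : (3 : Matrix (Fin 3) (Fin 3) ℚ) = (3 : ℚ) • 1 := by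
        rw [show (3 : Matrix (Fin 3) (Fin 3) ℚ) = algebraMap ℚ _ 3 from
          (map_ofNat (algebraMap ℚ (Matrix (Fin 3) (Fin 3) ℚ)) 3).symm,
          Algebra.algebraMap_eq_smul_one]
      simp only [map_add, map_pow, aeval_X, hY6, map_ofNat, h3]
      rw [← add_smul]
      norm_num
    have hdvd : minpoly ℚ Y ∣ (X ^ 6 + 3 : ℚ[X]) := minpoly.dvd ℚ Y haev
    have hint : IsIntegral ℚ Y := Matrix.isIntegral Y
    have hne1 : ¬ IsUnit (minpoly ℚ Y) := by
      intro hu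
      have := Polynomial.natDegree_eq_zero_of_isUnit hu
      have := minpoly.natDegree_pos hint
      omega
    obtain ⟨c, hc⟩ := hdvd
    rcases ratIrr.isUnit_or_isUnit hc with hu | hu
    · exact hne1 hu
    · have hc0 : c ≠ 0 := hu.ne_zero
      have hm0 : minpoly ℚ Y ≠ 0 := minpoly.ne_zero hint
      have h1 := Polynomial.natDegree_eq_zero_of_isUnit hu
      have h2 := Polynomial.natDegree_mul hm0 hc0
      rw [hc] at hdeg
      have h3 : (minpoly ℚ Y).natDegree = 6 := by omega
      have hdc : minpoly ℚ Y ∣ Y.charpoly := minpoly.dvd ℚ Y (Matrix.aeval_self_charpoly Y)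
      have hcdeg : Y.charpoly.natDegree = 3 := Y.charpoly_natDegree_eq_dim
      have := Polynomial.natDegree_le_of_dvd hdc Y.charpoly_monic.ne_zero
      omega
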